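/- For a symmetric positive semidefinite matrix M ∈ ℝ^{n×n} and any matrix P ∈ ℝ^{n×r} with orthonormal columns, Tr(Pᵀ M P) ≤ λ_1 + λ_2 + ⋯ + λ_r, the sum of the r largest eigenvalues of M, with equality when the columns of P are eigenvectors of M corresponding to those eigenvalues (Ky Fan maximum principle). -/

import Mathlib

open Matrix

lemma sum_ite_lt {n r : ℕ} (hrn : r ≤ n) (g : Fin n → ℝ) :
    ∑ i : Fin n, (if (i:ℕ) < r then g i else 0) = ∑ i : Fin r, g (Fin.castLE hrn i) := by
  set F : ℕ → ℝ := fun i => if h : i < n then (if i < r then g ⟨i, h⟩ else 0) else 0 with hF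
  calc ∑ i : Fin n, (if (i:ℕ) < r then g i else 0)
      = ∑ i : Fin n, F (i : ℕ) := Finset.sum_congr rfl (by intro i _; simp [hF, i.isLt])
    _ = ∑ i ∈ Finset.range n, F i := Fin.sum_univ_eq_sum_range F n
    _ = ∑ i ∈ Finset.range r, F i := by
        refine (Finset.sum_subset (Finset.range_subset_range.mpr hrn) ?_).symm
        intro i _ hi
        simp only [Finset.mem_range, not_lt] at hi
        simp [hF, Nat.not_lt.mpr hi]
    _ = ∑ i : Fin r, F (i : ℕ) := (Fin.sum_univ_eq_sum_range F r).symm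
    _ = ∑ i : Fin r, g (Fin.castLE hrn i) := by
        refine Finset.sum_congr rfl ?_
        intro i _
        have h1 : (i : ℕ) < n := lt_of_lt_of_le i.isLt hrn
        simp [hF, h1, i.isLt]
        rfl

lemma weighted_sum_le {n r : ℕ} (hrn : r ≤ n) (μ : Fin n → ℝ) (hmono : Antitone μ)
    (s : Fin n → ℝ) (h0 : ∀ i, 0 ≤ s i) (h1 : ∀ i, s i ≤ 1) (hs : ∑ i, s i = r) :
    ∑ i, μ i * s i ≤ ∑ i : Fin r, μ (Fin.castLE hrn i) := by
  rcases Nat.eq_zero_or_pos r with hr | hr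
  · subst hr
    have : ∀ i ∈ Finset.univ, s i = 0 :=
      (Finset.sum_eq_zero_iff_of_nonneg (fun i _ => h0 i)).mp (by simpa using hs)
    have : ∑ i : Fin n, μ i * s i = 0 := Finset.sum_eq_zero (fun i hi => by rw [this i hi, mul_zero])
    simp [this]
  · have hr1 : r - 1 < n := by omega
    set c : ℝ := μ ⟨r - 1, hr1⟩ with hc
    set t : Fin n → ℝ := fun i => if (i:ℕ) < r then (1:ℝ) else 0 with ht
    have htsum : ∑ i, t i = r := by
      have := sum_ite_lt hrn (fun _ => (1:ℝ))
      simp only [ht]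
      rw [this]
      simp
    have hrhs : ∑ i : Fin r, μ (Fin.castLE hrn i) = ∑ i, μ i * t i := by
      rw [← sum_ite_lt hrn μ]
      refine Finset.sum_congr rfl fun i _ => ?_
      by_cases h : (i:ℕ) < r <;> simp [ht, h]
    rw [hrhs, ← sub_nonneg, ← Finset.sum_sub_distrib]
    have key : ∀ i : Fin n, μ i * t i - μ i * s i = (μ i - c) * (t i - s i) + c * (t i - s i) := by
      intro i; ring
    rw [Finset.sum_congr rfl fun i _ => key i, Finset.sum_add_distrib, ← Finset.mul_sum,
      Finset.sum_sub_distrib, htsum, hs, sub_self, mul_zero, add_zero]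
    apply Finset.sum_nonneg
    intro i _
    by_cases h : (i:ℕ) < r
    · have h1' : t i - s i ≥ 0 := by simp [ht, h]; linarith [h1 i]
      have h2' : μ i - c ≥ 0 := by
        have : i ≤ (⟨r-1, hr1⟩ : Fin n) := by
          rw [Fin.le_def]; simp; omega
        have := hmono this
        linarith
      positivity
    · have h1' : t i - s i ≤ 0 := by simp [ht, h]; linarith [h0 i]
      have h2' : μ i - c ≤ 0 := by
        have : (⟨r-1, hr1⟩ : Fin n) ≤ i := by
          rw [Fin.le_def]; simp; omega
        have := hmono this
        linarith
      nlinarith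

lemma trace_conj_diag {n r : ℕ} (μ : Fin n → ℝ) (Q : Matrix (Fin n) (Fin r) ℝ) :
    (Qᵀ * Matrix.diagonal μ * Q).trace = ∑ i, μ i * ∑ j, Q i j ^ 2 := by
  simp only [Matrix.trace, Matrix.diag, Matrix.mul_apply, Matrix.diagonal_apply,
    Matrix.transpose_apply, Finset.sum_mul, Finset.mul_sum]
  rw [Finset.sum_comm]
  refine Finset.sum_congr rfl fun i _ => ?_
  refine Finset.sum_congr rfl fun j _ => ?_
  rw [Finset.sum_eq_single i]
  · simp; ring
  · intro k _ hk; simp [hk]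
  · simp

lemma row_sq_le {n r : ℕ} (Q : Matrix (Fin n) (Fin r) ℝ) (hQ : Qᵀ * Q = 1) (i : Fin n) :
    ∑ j, Q i j ^ 2 ≤ 1 := by
  have hA : (Q * Qᵀ) * (Q * Qᵀ) = Q * Qᵀ := by
    rw [Matrix.mul_assoc, ← Matrix.mul_assoc Qᵀ, hQ, Matrix.one_mul]
  have hBpsd : ((1 - Q * Qᵀ) : Matrix (Fin n) (Fin n) ℝ).PosSemidef := by
    have h1 : ((1 - Q * Qᵀ) : Matrix (Fin n) (Fin n) ℝ)ᴴ * (1 - Q * Qᵀ) = 1 - Q * Qᵀ := by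
      have hT : ((1 - Q * Qᵀ) : Matrix (Fin n) (Fin n) ℝ)ᴴ = 1 - Q * Qᵀ := by
        ext a b
        simp [Matrix.conjTranspose_apply, Matrix.sub_apply, Matrix.mul_apply,
          Matrix.transpose_apply, Matrix.one_apply, eq_comm, mul_comm]
      rw [hT, Matrix.sub_mul, Matrix.mul_sub, Matrix.mul_sub, hA]
      simp
    rw [← h1]
    exact Matrix.posSemidef_conjTranspose_mul_self _
  have hd := hBpsd.dotProduct_mulVec_nonneg (Pi.single i 1)
  simp only [star_trivial, Matrix.mulVec, dotProduct, Pi.single_apply,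
    mul_ite, mul_one, mul_zero, ite_mul, one_mul, zero_mul,
    Finset.sum_ite_eq', Finset.mem_univ, if_true] at hd
  have : ((1 - Q * Qᵀ) : Matrix (Fin n) (Fin n) ℝ) i i = 1 - ∑ j, Q i j ^ 2 := by
    simp [Matrix.sub_apply, Matrix.mul_apply, Matrix.one_apply, sq]
  rw [this] at hd
  linarith

/-- Ky Fan maximum principle: for symmetric PSD `M = U diag(λ) Uᵀ` with
orthogonal `U` and eigenvalues `λ` in nonincreasing order, any orthonormal
`P ∈ ℝ^{n×r}` satisfies `Tr(PᵀMP) ≤ λ₁ + ⋯ + λ_r`, with equality for the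
matrix of the top-`r` eigenvectors. -/
theorem ky_fan_max_principle (n r : ℕ) (hrn : r ≤ n)
    (M U : Matrix (Fin n) (Fin n) ℝ) (μ : Fin n → ℝ)
    (hMsymm : Mᵀ = M) (hMpsd : M.PosSemidef)
    (hU : Uᵀ * U = 1) (hdecomp : M = U * Matrix.diagonal μ * Uᵀ)
    (hmono : Antitone μ) :
    (∀ P : Matrix (Fin n) (Fin r) ℝ, Pᵀ * P = 1 →
      (Pᵀ * M * P).trace ≤ ∑ i : Fin r, μ (Fin.castLE hrn i)) ∧
    (((U.submatrix id (Fin.castLE hrn))ᵀ * M * (U.submatrix id (Fin.castLE hrn))).trace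
      = ∑ i : Fin r, μ (Fin.castLE hrn i)) := by
  have hUUT : U * Uᵀ = 1 := mul_eq_one_comm.mp hU
  constructor
  · intro P hP
    set Q : Matrix (Fin n) (Fin r) ℝ := Uᵀ * P with hQdef
    have hQT : Qᵀ = Pᵀ * U := by
      rw [hQdef, Matrix.transpose_mul, Matrix.transpose_transpose]
    have hQorth : Qᵀ * Q = 1 := by
      rw [hQT, hQdef, Matrix.mul_assoc, ← Matrix.mul_assoc U, hUUT, Matrix.one_mul, hP]
    have htr : Pᵀ * M * P = Qᵀ * Matrix.diagonal μ * Q := by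
      rw [hdecomp, hQT, hQdef]
      simp only [Matrix.mul_assoc]
    rw [htr, trace_conj_diag]
    refine weighted_sum_le hrn μ hmono _ (fun i => Finset.sum_nonneg fun j _ => sq_nonneg _)
      (fun i => row_sq_le Q hQorth i) ?_
    have h1 : ∑ i : Fin n, ∑ j : Fin r, Q i j ^ 2 = (Qᵀ * Q).trace := by
      rw [Finset.sum_comm]
      simp [Matrix.trace, Matrix.diag, Matrix.mul_apply, Matrix.transpose_apply, sq]
    rw [h1, hQorth]
    simp [Matrix.trace]
  · set f : Fin r → Fin n := Fin.castLE hrn with hf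
    set P : Matrix (Fin n) (Fin r) ℝ := U.submatrix id f with hPdef
    set E : Matrix (Fin n) (Fin r) ℝ := Uᵀ * P with hEdef
    have hE : ∀ i j, E i j = (1 : Matrix (Fin n) (Fin n) ℝ) i (f j) := by
      intro i j
      rw [← hU]
      simp [hEdef, hPdef, Matrix.mul_apply]
    have hET : Eᵀ = Pᵀ * U := by
      rw [hEdef, Matrix.transpose_mul, Matrix.transpose_transpose]
    have htr : Pᵀ * M * P = Eᵀ * Matrix.diagonal μ * E := by
      rw [hdecomp, hET, hEdef]
      simp only [Matrix.mul_assoc]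
    rw [htr, trace_conj_diag]
    have hrow : ∀ i : Fin n, ∑ j : Fin r, E i j ^ 2 = if (i:ℕ) < r then 1 else 0 := by
      intro i
      by_cases h : (i:ℕ) < r
      · rw [if_pos h, Finset.sum_eq_single ⟨(i:ℕ), h⟩]
        · have : f ⟨(i:ℕ), h⟩ = i := by ext; simp [hf]
          rw [hE, this]
          simp [Matrix.one_apply]
        · intro k _ hk
          rw [hE]
          have : i ≠ f k := by
            intro hik
            apply hk
            ext
            have : (i:ℕ) = (f k : ℕ) := by rw [hik]
            simpa [hf] using this.symm
          simp [Matrix.one_apply, this]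
        · simp
      · rw [if_neg h]
        apply Finset.sum_eq_zero
        intro k _
        rw [hE]
        have : i ≠ f k := by
          intro hik
          apply h
          rw [hik]
          simpa [hf] using k.isLt
        simp [Matrix.one_apply, this]
    calc ∑ i : Fin n, μ i * ∑ j : Fin r, E i j ^ 2
        = ∑ i : Fin n, (if (i:ℕ) < r then μ i else 0) := by
          refine Finset.sum_congr rfl fun i _ => ?_
          rw [hrow]
          by_cases h : (i:ℕ) < r <;> simp [h]
      _ = ∑ i : Fin r, μ (Fin.castLE hrn i) := sum_ite_lt hrn μ
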